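/- For every integer m ≥ 7 with m ≡ 1 (mod 6), the polynomial y₁y₂(y₁+y₂)(y₁²+y₁y₂+y₂²)² divides the polynomial G_m^{(2)} = (y₁+y₂)^m − y₁^m − y₂^m in the polynomial ring ℚ[y₁,y₂]. -/

import Mathlib

open MvPolynomial

private lemma prime_x : Prime (X 0 : MvPolynomial (Fin 2) ℚ) := by
  rw [← MulEquiv.prime_iff (finSuccEquiv ℚ 1).toMulEquiv]
  rw [show ((finSuccEquiv ℚ 1).toMulEquiv (X 0 : MvPolynomial (Fin 2) ℚ))
      = (finSuccEquiv ℚ 1) (X 0) from rfl, finSuccEquiv_X_zero]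
  exact Polynomial.prime_X

private lemma prime_y : Prime (X 1 : MvPolynomial (Fin 2) ℚ) := by
  rw [← MulEquiv.prime_iff (renameEquiv ℚ (Equiv.swap (0 : Fin 2) 1)).toMulEquiv]
  rw [show ((renameEquiv ℚ (Equiv.swap (0 : Fin 2) 1)).toMulEquiv (X 1 : MvPolynomial (Fin 2) ℚ))
      = (renameEquiv ℚ (Equiv.swap (0 : Fin 2) 1)) (X 1) from rfl]
  simpa using prime_x

private lemma prime_s : Prime (X 0 + X 1 : MvPolynomial (Fin 2) ℚ) := by
  rw [← MulEquiv.prime_iff (finSuccEquiv ℚ 1).toMulEquiv]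
  rw [show ((finSuccEquiv ℚ 1).toMulEquiv (X 0 + X 1 : MvPolynomial (Fin 2) ℚ))
      = (finSuccEquiv ℚ 1) (X 0 + X 1) from rfl]
  have h : (finSuccEquiv ℚ 1) (X 0 + X 1) =
      Polynomial.X - Polynomial.C (-(X 0 : MvPolynomial (Fin 1) ℚ)) := by
    rw [map_add, finSuccEquiv_X_zero,
      show (1 : Fin 2) = Fin.succ 0 from rfl, finSuccEquiv_X_succ]
    rw [map_neg, sub_neg_eq_add]
  rw [h]
  exact Polynomial.prime_X_sub_C _
-- non-divisibility facts
private lemma ndvd_x_s : ¬ (X 0 : MvPolynomial (Fin 2) ℚ) ∣ (X 0 + X 1) := by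
  rintro ⟨c, hc⟩
  have := congrArg (eval ![0, 1]) hc
  simp at this

private lemma ndvd_y_s : ¬ (X 1 : MvPolynomial (Fin 2) ℚ) ∣ (X 0 + X 1) := by
  rintro ⟨c, hc⟩
  have := congrArg (eval ![1, 0]) hc
  simp at this

private lemma ndvd_y_x : ¬ (X 1 : MvPolynomial (Fin 2) ℚ) ∣ (X 0) := by
  rintro ⟨c, hc⟩
  have := congrArg (eval ![1, 0]) hc
  simp at this
private lemma dvd3 {f : MvPolynomial (Fin 2) ℚ} (hx : X 0 ∣ f) (hy : X 1 ∣ f)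
    (hs : (X 0 + X 1) ∣ f) : (X 0 * X 1 * (X 0 + X 1)) ∣ f := by
  obtain ⟨g, rfl⟩ := hs
  have hxg : (X 0 : MvPolynomial (Fin 2) ℚ) ∣ g :=
    (prime_x.2.2 _ _ hx).resolve_left ndvd_x_s
  obtain ⟨h, rfl⟩ := hxg
  have hyh : (X 1 : MvPolynomial (Fin 2) ℚ) ∣ h := by
    rcases prime_y.2.2 _ _ hy with h1 | h2
    · exact absurd h1 ndvd_y_s
    · exact (prime_y.2.2 _ _ h2).resolve_left ndvd_y_x
  obtain ⟨k, rfl⟩ := hyh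
  exact ⟨k, by ring⟩

private lemma ps_dvd (n : ℕ) (hn : Odd n) :
    (X 0 * X 1 * (X 0 + X 1) : MvPolynomial (Fin 2) ℚ) ∣
      ((X 0 + X 1) ^ n - (X 0) ^ n - (X 1) ^ n) := by
  have hn0 : n ≠ 0 := by rintro rfl; simp at hn
  apply dvd3
  · have h1 : (X 0 : MvPolynomial (Fin 2) ℚ) ∣ ((X 0 + X 1) ^ n - (X 1) ^ n) := by
      have h0 := sub_dvd_pow_sub_pow (X 0 + X 1 : MvPolynomial (Fin 2) ℚ) (X 1) n
      rw [add_sub_cancel_right] at h0; exact h0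
    have := dvd_sub h1 (dvd_pow_self (X 0 : MvPolynomial (Fin 2) ℚ) hn0)
    convert this using 1; ring
  · have h1 : (X 1 : MvPolynomial (Fin 2) ℚ) ∣ ((X 0 + X 1) ^ n - (X 0) ^ n) := by
      have h0 := sub_dvd_pow_sub_pow (X 0 + X 1 : MvPolynomial (Fin 2) ℚ) (X 0) n
      rw [add_sub_cancel_left] at h0; exact h0
    have := dvd_sub h1 (dvd_pow_self (X 1 : MvPolynomial (Fin 2) ℚ) hn0)
    exact this
  · have h1 : (X 0 + X 1 : MvPolynomial (Fin 2) ℚ) ∣ ((X 0) ^ n - (-(X 1)) ^ n) := by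
      have h0 := sub_dvd_pow_sub_pow (X 0 : MvPolynomial (Fin 2) ℚ) (-(X 1)) n
      rw [sub_neg_eq_add] at h0; exact h0
    rw [hn.neg_pow] at h1
    have := dvd_sub (dvd_pow_self (X 0 + X 1 : MvPolynomial (Fin 2) ℚ) hn0) h1
    convert this using 1; ring
private lemma e_dvd_u (k : ℕ) :
    ((X 0) ^ 2 + X 0 * X 1 + (X 1) ^ 2 : MvPolynomial (Fin 2) ℚ) ∣
      ((X 0 + X 1) ^ (6 * k + 2) + (X 0) ^ (6 * k + 2) + (X 1) ^ (6 * k + 2)) := by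
  set x : MvPolynomial (Fin 2) ℚ := X 0
  set y : MvPolynomial (Fin 2) ℚ := X 1
  have h1 : (x ^ 2 + x * y + y ^ 2) ∣ (((x + y) ^ 6) ^ k - ((x * y * (x + y)) ^ 2) ^ k) :=
    dvd_trans ⟨(x + y) * ((x + y) ^ 3 + x * y * (x + y)), by ring⟩
      (sub_dvd_pow_sub_pow ((x + y) ^ 6) ((x * y * (x + y)) ^ 2) k)
  have h2 : (x ^ 2 + x * y + y ^ 2) ∣ ((x ^ 6) ^ k - ((x * y * (x + y)) ^ 2) ^ k) :=
    dvd_trans ⟨x * (x ^ 3 - x * y * (x + y)), by ring⟩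
      (sub_dvd_pow_sub_pow (x ^ 6) ((x * y * (x + y)) ^ 2) k)
  have h3 : (x ^ 2 + x * y + y ^ 2) ∣ ((y ^ 6) ^ k - ((x * y * (x + y)) ^ 2) ^ k) :=
    dvd_trans ⟨y * (y ^ 3 - x * y * (x + y)), by ring⟩
      (sub_dvd_pow_sub_pow (y ^ 6) ((x * y * (x + y)) ^ 2) k)
  obtain ⟨d1, hd1⟩ := h1
  obtain ⟨d2, hd2⟩ := h2
  obtain ⟨d3, hd3⟩ := h3
  refine ⟨2 * ((x * y * (x + y)) ^ 2) ^ k + d1 * (x + y) ^ 2 + d2 * x ^ 2 + d3 * y ^ 2, ?_⟩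
  rw [show 6 * k + 2 = 6 * k + 2 by ring, pow_add, pow_add, pow_add,
    pow_mul, pow_mul, pow_mul]
  linear_combination (x + y) ^ 2 * hd1 + x ^ 2 * hd2 + y ^ 2 * hd3

private lemma main_dvd (k : ℕ) :
    (X 0 * X 1 * (X 0 + X 1) * ((X 0) ^ 2 + X 0 * X 1 + (X 1) ^ 2) ^ 2 :
        MvPolynomial (Fin 2) ℚ) ∣
      ((X 0 + X 1) ^ (6 * k + 1) - (X 0) ^ (6 * k + 1) - (X 1) ^ (6 * k + 1)) := by
  induction k with
  | zero => exact ⟨0, by ring⟩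
  | succ k ih =>
    set x : MvPolynomial (Fin 2) ℚ := X 0
    set y : MvPolynomial (Fin 2) ℚ := X 1
    obtain ⟨c1, hc1⟩ := ps_dvd (6 * k + 3) ⟨3 * k + 1, by ring⟩
    obtain ⟨c2, hc2⟩ := e_dvd_u k
    obtain ⟨c3, hc3⟩ := ih
    refine ⟨c1 + 2 * c2 + (x * y) ^ 2 * (x + y) ^ 2 * c3, ?_⟩
    have key : (x + y) ^ (6 * (k + 1) + 1) - x ^ (6 * (k + 1) + 1) - y ^ (6 * (k + 1) + 1) =
        (x ^ 2 + x * y + y ^ 2) ^ 2 *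
            ((x + y) ^ (6 * k + 3) - x ^ (6 * k + 3) - y ^ (6 * k + 3))
          + 2 * (x * y) * (x + y) * (x ^ 2 + x * y + y ^ 2) *
            ((x + y) ^ (6 * k + 2) + x ^ (6 * k + 2) + y ^ (6 * k + 2))
          + (x * y) ^ 2 * (x + y) ^ 2 *
            ((x + y) ^ (6 * k + 1) - x ^ (6 * k + 1) - y ^ (6 * k + 1)) := by
      ring
    rw [key, hc1, hc2, hc3]
    ring

theorem G_divisibility_mod6_eq1 (m : ℕ) (hm : 7 ≤ m) (hmod : m % 6 = 1) :
    (X 0 * X 1 * (X 0 + X 1) * ((X 0) ^ 2 + X 0 * X 1 + (X 1) ^ 2) ^ 2 :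
        MvPolynomial (Fin 2) ℚ) ∣
      ((X 0 + X 1) ^ m - (X 0) ^ m - (X 1) ^ m) := by
  have h : 6 * (m / 6) + 1 = m := by omega
  rw [← h]
  exact main_dvd (m / 6)
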